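/- Let T = [a₁, b₁] × [a₂, b₂] be a compact rectangle in ℝ² and let Y be a real-valued stochastic process indexed by T on a probability space such that for all p, q ∈ T the increment Y(p) − Y(q) has a centered Gaussian distribution with variance E[(Y(p) − Y(q))²] ≤ C·‖p − q‖ for a constant C ≥ 0, where ‖·‖ is the Euclidean norm. Then Y admits a modification with continuous sample paths. -/

import Mathlib

open MeasureTheory ProbabilityTheory Filter Set Real
open scoped NNReal ENNReal


open MeasureTheory ProbabilityTheory Filter Set Real
open scoped NNReal ENNReal

lemma KCaux_exp_bound {v : ℝ} (hv : 0 < v) (x : ℝ) :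
    x ^ 6 * Real.exp (-x ^ 2 / (2 * v)) ≤ 1728 * v ^ 3 * Real.exp (-x ^ 2 / (4 * v)) := by
  have key : x ^ 6 * Real.exp (-x ^ 2 / (4 * v)) ≤ 1728 * v ^ 3 := by
    set t : ℝ := x ^ 2 / (4 * v) with ht
    have ht0 : 0 ≤ t := by positivity
    have h1 : 1 + t / 3 ≤ Real.exp (t / 3) := by
      have := Real.add_one_le_exp (t / 3); linarith
    have h2 : (t / 3) ^ 3 ≤ Real.exp t := by
      calc (t / 3) ^ 3 ≤ (1 + t / 3) ^ 3 := by nlinarith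
        _ ≤ Real.exp (t / 3) ^ 3 := by
            apply pow_le_pow_left₀ (by positivity) h1
        _ = Real.exp t := by
            rw [← Real.exp_nat_mul]; congr 1; push_cast; ring
    have hx6 : x ^ 6 = 64 * v ^ 3 * t ^ 3 := by
      rw [ht]; field_simp; ring
    have hinv : Real.exp (-x ^ 2 / (4 * v)) = (Real.exp t)⁻¹ := by
      rw [← Real.exp_neg]; congr 1; rw [ht]; field_simp
    rw [hx6, hinv, mul_inv_le_iff₀ (Real.exp_pos t)]
    have h3 : 64 * v ^ 3 * t ^ 3 = 1728 * v ^ 3 * (t / 3) ^ 3 := by ring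
    rw [h3]
    exact mul_le_mul_of_nonneg_left h2 (by positivity)
  have hsplit : Real.exp (-x ^ 2 / (2 * v)) =
      Real.exp (-x ^ 2 / (4 * v)) * Real.exp (-x ^ 2 / (4 * v)) := by
    rw [← Real.exp_add]; congr 1; field_simp; ring
  calc x ^ 6 * Real.exp (-x ^ 2 / (2 * v))
      = (x ^ 6 * Real.exp (-x ^ 2 / (4 * v))) * Real.exp (-x ^ 2 / (4 * v)) := by
        rw [hsplit]; ring
    _ ≤ 1728 * v ^ 3 * Real.exp (-x ^ 2 / (4 * v)) :=
        mul_le_mul_of_nonneg_right key (Real.exp_pos _).le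

lemma KCaux_gauss_tail (v : ℝ≥0) {ε : ℝ} (hε : 0 < ε) :
    gaussianReal 0 v {x | ε ≤ |x|} ≤ ENNReal.ofReal (3000 * (v : ℝ) ^ 3 / ε ^ 6) := by
  have hset : MeasurableSet {x : ℝ | ε ≤ |x|} :=
    measurableSet_le measurable_const _root_.measurable_abs
  rcases eq_or_ne v 0 with rfl | hv
  · rw [gaussianReal_zero_var, Measure.dirac_apply' _ hset]
    have h0 : (0 : ℝ) ∉ {x : ℝ | ε ≤ |x|} := by
      simp only [Set.mem_setOf_eq, abs_zero, not_le]; exact hε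
    rw [Set.indicator_of_notMem h0]
    exact zero_le
  · have hv0 : (0 : ℝ) < v := by positivity
    rw [gaussianReal_apply 0 hv]
    set g : ℝ → ℝ := fun x =>
      (1728 * (v:ℝ)^3 / ε^6 * (Real.sqrt (2 * π * v))⁻¹) * Real.exp (-(4*(v:ℝ))⁻¹ * x^2)
      with hg
    have hgx : ∀ x : ℝ, g x =
        1728 * (v:ℝ)^3 / ε^6 * ((Real.sqrt (2 * π * v))⁻¹ * Real.exp (-x^2 / (4 * v))) := by
      intro x
      have hex : -(4*(v:ℝ))⁻¹ * x^2 = -x^2 / (4 * v) := by field_simp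
      rw [hg]
      simp only [hex]
      ring
    have hpt : ∀ x ∈ {x : ℝ | ε ≤ |x|}, gaussianPDF 0 v x ≤ ENNReal.ofReal (g x) := by
      intro x hx
      rw [gaussianPDF]
      apply ENNReal.ofReal_le_ofReal
      have hx6 : ε ^ 6 ≤ x ^ 6 := by
        calc ε ^ 6 ≤ |x| ^ 6 := pow_le_pow_left₀ hε.le hx 6
          _ = x ^ 6 := by rw [← abs_pow]; exact abs_of_nonneg (by positivity)
      have h1 : gaussianPDFReal 0 v x ≤ (x^6 / ε^6) * gaussianPDFReal 0 v x := by
        nth_rewrite 1 [← one_mul (gaussianPDFReal 0 v x)]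
        apply mul_le_mul_of_nonneg_right _ (gaussianPDFReal_nonneg 0 v x)
        rw [le_div_iff₀ (by positivity)]; linarith
      refine h1.trans ?_
      rw [gaussianPDFReal, hgx x]
      have hb := KCaux_exp_bound hv0 x
      simp only [sub_zero]
      calc x ^ 6 / ε ^ 6 * ((√(2 * π * ↑v))⁻¹ * Real.exp (-x ^ 2 / (2 * ↑v)))
          = (1 / ε^6) * (√(2 * π * ↑v))⁻¹ * (x ^ 6 * Real.exp (-x ^ 2 / (2 * ↑v))) := by ring
        _ ≤ (1 / ε^6) * (√(2 * π * ↑v))⁻¹ * (1728 * (v:ℝ)^3 * Real.exp (-x ^ 2 / (4 * ↑v))) := by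
            apply mul_le_mul_of_nonneg_left hb (by positivity)
        _ = 1728 * ↑v ^ 3 / ε ^ 6 * ((√(2 * π * ↑v))⁻¹ * Real.exp (-x ^ 2 / (4 * ↑v))) := by ring
    have hint0 : Integrable (fun x : ℝ => Real.exp (-(4*(v:ℝ))⁻¹ * x^2)) :=
      integrable_exp_neg_mul_sq (by positivity)
    have hint : Integrable g := hint0.const_mul _
    have hIg : ∫ x, g x ≤ 3000 * (v:ℝ)^3 / ε^6 := by
      have h2' : Real.sqrt 2 ≤ 1.7 := by
        nlinarith [Real.sq_sqrt (by norm_num : (0:ℝ) ≤ 2), Real.sqrt_nonneg 2]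
      have hI : ∫ x, g x = (1728 * (v:ℝ)^3 / ε^6 * (Real.sqrt (2 * π * v))⁻¹)
          * Real.sqrt (π / (4*(v:ℝ))⁻¹) := by
        rw [hg, integral_const_mul, integral_gaussian]
      have h4 : π / (4*(v:ℝ))⁻¹ = 2 * (2 * π * v) := by field_simp; ring
      have hprod : (Real.sqrt (2*π*(v:ℝ)))⁻¹ * Real.sqrt (π / (4*(v:ℝ))⁻¹) = Real.sqrt 2 := by
        rw [h4, Real.sqrt_mul (by norm_num : (0:ℝ) ≤ 2)]
        have hne : Real.sqrt (2*π*(v:ℝ)) ≠ 0 := by positivity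
        field_simp
      rw [hI, mul_assoc, hprod]
      have : 1728 * (v:ℝ)^3 / ε^6 * Real.sqrt 2 ≤ 1728 * (v:ℝ)^3 / ε^6 * 1.7 :=
        mul_le_mul_of_nonneg_left h2' (by positivity)
      calc 1728 * (v:ℝ)^3 / ε^6 * Real.sqrt 2 ≤ 1728 * (v:ℝ)^3 / ε^6 * 1.7 := this
        _ ≤ 3000 * (v:ℝ)^3 / ε^6 := by
            rw [div_mul_eq_mul_div, div_le_div_iff₀ (by positivity) (by positivity)]
            nlinarith [pow_nonneg (le_of_lt hv0) 3, pow_pos hε 6]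
    calc ∫⁻ x in {x : ℝ | ε ≤ |x|}, gaussianPDF 0 v x
        ≤ ∫⁻ x in {x : ℝ | ε ≤ |x|}, ENNReal.ofReal (g x) := by
          apply setLIntegral_mono _ hpt
          exact (Measurable.const_mul (by fun_prop) _).ennreal_ofReal
      _ ≤ ∫⁻ x, ENNReal.ofReal (g x) := setLIntegral_le_lintegral _ _
      _ = ENNReal.ofReal (∫ x, g x) := by
          rw [ofReal_integral_eq_lintegral_ofReal hint]
          filter_upwards with x
          rw [hg]; positivity
      _ ≤ ENNReal.ofReal (3000 * (v:ℝ)^3 / ε^6) := ENNReal.ofReal_le_ofReal hIg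

open MeasureTheory ProbabilityTheory Filter Set Real
open scoped NNReal ENNReal

noncomputable section KCaux

/-- geometric scale -/
def KCeps (n : ℕ) : ℝ := (9/10 : ℝ) ^ n

lemma KCeps_pos (n : ℕ) : 0 < KCeps n := by rw [KCeps]; positivity

lemma KCeps_succ (n : ℕ) : KCeps (n+1) = (9/10) * KCeps n := by
  rw [KCeps, KCeps, pow_succ]; ring

lemma KCeps_tendsto : Filter.Tendsto KCeps Filter.atTop (nhds 0) :=
  tendsto_pow_atTop_nhds_zero_of_lt_one (by norm_num) (by norm_num)

/-- unit square -/
def KCS : Set (ℝ × ℝ) := Set.Icc 0 1 ×ˢ Set.Icc 0 1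

lemma KCS_mem {p : ℝ × ℝ} : p ∈ KCS ↔ (0 ≤ p.1 ∧ p.1 ≤ 1) ∧ (0 ≤ p.2 ∧ p.2 ≤ 1) := by
  simp only [KCS, Set.mem_prod, Set.mem_Icc]

/-- grid point -/
def KCgp (n i j : ℕ) : ℝ × ℝ := ((i : ℝ) / 2 ^ n, (j : ℝ) / 2 ^ n)

lemma KCgp_mem {n i j : ℕ} (hi : i ≤ 2 ^ n) (hj : j ≤ 2 ^ n) : KCgp n i j ∈ KCS := by
  rw [KCS_mem, KCgp]
  have h2 : (0:ℝ) < 2 ^ n := by positivity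
  have hi' : (i : ℝ) ≤ 2 ^ n := by exact_mod_cast Nat.cast_le.mpr hi |>.trans_eq (by push_cast; ring)
  have hj' : (j : ℝ) ≤ 2 ^ n := by exact_mod_cast Nat.cast_le.mpr hj |>.trans_eq (by push_cast; ring)
  constructor
  · constructor
    · positivity
    · rw [div_le_one h2]; exact hi'
  · constructor
    · positivity
    · rw [div_le_one h2]; exact hj'

lemma KCgp_double (n i j : ℕ) : KCgp (n+1) (2*i) (2*j) = KCgp n i j := by
  rw [KCgp, KCgp, Prod.mk.injEq]
  constructor <;> · push_cast; rw [pow_succ]; field_simp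

/-- dyadic index -/
def KCnx (n : ℕ) (x : ℝ) : ℕ := ⌊(2:ℝ) ^ n * x⌋₊

lemma KCnx_le {n : ℕ} {x : ℝ} (hx : x ≤ 1) : KCnx n x ≤ 2 ^ n := by
  rw [KCnx]
  have : (2:ℝ) ^ n * x ≤ ((2 ^ n : ℕ) : ℝ) := by push_cast; nlinarith [pow_pos (by norm_num : (0:ℝ) < 2) n]
  calc ⌊(2:ℝ)^n * x⌋₊ ≤ ⌊((2^n : ℕ) : ℝ)⌋₊ := Nat.floor_le_floor this
    _ = 2 ^ n := Nat.floor_natCast _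

lemma KCnx_le_mul {n : ℕ} {x : ℝ} (hx : 0 ≤ x) : (KCnx n x : ℝ) ≤ 2 ^ n * x :=
  Nat.floor_le (by positivity)

lemma KCnx_lt {n : ℕ} (x : ℝ) : (2:ℝ) ^ n * x < KCnx n x + 1 := Nat.lt_floor_add_one _

/-- closeness of the dyadic approximation -/
lemma KCnx_dist {n : ℕ} {x : ℝ} (hx : 0 ≤ x) : |x - (KCnx n x : ℝ) / 2 ^ n| ≤ (1/2) ^ n := by
  have h2 : (0:ℝ) < 2 ^ n := by positivity
  have h1 := KCnx_le_mul (n := n) hx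
  have h2' := KCnx_lt (n := n) x
  have hA : (KCnx n x : ℝ)/2^n ≤ x := by rw [div_le_iff₀ h2]; linarith [h1]
  have hB : x < ((KCnx n x : ℝ)+1)/2^n := by rw [lt_div_iff₀ h2]; linarith [h2']
  have hpow : ((1:ℝ)/2)^n = (2^n)⁻¹ := by rw [one_div, inv_pow]
  have hdiff : ((KCnx n x : ℝ)+1)/2^n - (KCnx n x : ℝ)/2^n = (2^n)⁻¹ := by
    field_simp
    ring
  rw [abs_le]
  constructor
  · have hnn : (0:ℝ) ≤ (1/2:ℝ)^n := by positivity
    linarith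
  · linarith

/-- index distance under spatial closeness -/
lemma KCnx_close {n : ℕ} {x y : ℝ} (hx : 0 ≤ x) (hy : 0 ≤ y) (h : x - y ≤ (1/2) ^ n) :
    KCnx n x ≤ KCnx n y + 1 := by
  have h2 : (0:ℝ) < 2 ^ n := by positivity
  have key : (2:ℝ) ^ n * x < (KCnx n y : ℝ) + 2 := by
    have h1 := KCnx_lt (n := n) y
    have hpow : (2:ℝ)^n * (1/2)^n = 1 := by rw [← mul_pow]; norm_num
    nlinarith
  have : KCnx n x < KCnx n y + 2 := by
    rw [KCnx, Nat.floor_lt (by positivity)]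
    push_cast
    linarith
  omega

/-- refinement bounds -/
lemma KCnx_refine_le {n : ℕ} {x : ℝ} (hx : 0 ≤ x) : 2 * KCnx n x ≤ KCnx (n+1) x := by
  rw [KCnx, KCnx, Nat.le_floor_iff (by positivity)]
  have h1 := KCnx_le_mul (n := n) hx
  push_cast
  rw [pow_succ]
  rw [KCnx] at h1
  nlinarith

lemma KCnx_refine_ge {n : ℕ} {x : ℝ} (hx : 0 ≤ x) : KCnx (n+1) x ≤ 2 * KCnx n x + 1 := by
  have h2 := KCnx_lt (n := n) x
  have : KCnx (n+1) x < 2 * KCnx n x + 2 := by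
    rw [KCnx, Nat.floor_lt (by positivity)]
    push_cast
    rw [pow_succ]
    nlinarith
  omega

end KCaux

section KCchain

variable {Ω : Type*}

/-- goodness of a sample at level n -/
def KCGood (Z : ℝ × ℝ → Ω → ℝ) (n : ℕ) (ω : Ω) : Prop :=
  (∀ i < 2^n, ∀ j ≤ 2^n, |Z (KCgp n (i+1) j) ω - Z (KCgp n i j) ω| < KCeps n) ∧
  (∀ i ≤ 2^n, ∀ j < 2^n, |Z (KCgp n i (j+1)) ω - Z (KCgp n i j) ω| < KCeps n)

variable {Z : ℝ × ℝ → Ω → ℝ} {n : ℕ} {ω : Ω}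

lemma KCstepH (hg : KCGood Z n ω) {i i' j : ℕ} (hi : i ≤ 2^n) (hi' : i' ≤ 2^n)
    (hj : j ≤ 2^n) (h1 : i ≤ i' + 1) (h2 : i' ≤ i + 1) :
    |Z (KCgp n i' j) ω - Z (KCgp n i j) ω| ≤ KCeps n := by
  rcases (by omega : i' = i ∨ i' = i + 1 ∨ i = i' + 1) with rfl | h | h
  · simp [KCeps_pos n |>.le]
  · subst h
    exact (hg.1 i (by omega) j hj).le
  · subst h
    rw [abs_sub_comm]
    exact (hg.1 i' (by omega) j hj).le

lemma KCstepV (hg : KCGood Z n ω) {i j j' : ℕ} (hi : i ≤ 2^n) (hj : j ≤ 2^n)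
    (hj' : j' ≤ 2^n) (h1 : j ≤ j' + 1) (h2 : j' ≤ j + 1) :
    |Z (KCgp n i j') ω - Z (KCgp n i j) ω| ≤ KCeps n := by
  rcases (by omega : j' = j ∨ j' = j + 1 ∨ j = j' + 1) with rfl | h | h
  · simp [KCeps_pos n |>.le]
  · subst h
    exact (hg.2 i hi j (by omega)).le
  · subst h
    rw [abs_sub_comm]
    exact (hg.2 i hi j' (by omega)).le

lemma KCstep2 (hg : KCGood Z n ω) {i i' j j' : ℕ} (hi : i ≤ 2^n) (hi' : i' ≤ 2^n)
    (hj : j ≤ 2^n) (hj' : j' ≤ 2^n)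
    (h1 : i ≤ i' + 1) (h2 : i' ≤ i + 1) (h3 : j ≤ j' + 1) (h4 : j' ≤ j + 1) :
    |Z (KCgp n i' j') ω - Z (KCgp n i j) ω| ≤ 2 * KCeps n := by
  have hV : |Z (KCgp n i' j') ω - Z (KCgp n i' j) ω| ≤ KCeps n :=
    KCstepV hg hi' hj hj' h3 h4
  have hH : |Z (KCgp n i' j) ω - Z (KCgp n i j) ω| ≤ KCeps n :=
    KCstepH hg hi hi' hj h1 h2
  calc |Z (KCgp n i' j') ω - Z (KCgp n i j) ω|
      ≤ |Z (KCgp n i' j') ω - Z (KCgp n i' j) ω| + |Z (KCgp n i' j) ω - Z (KCgp n i j) ω| :=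
        abs_sub_le _ _ _
    _ ≤ 2 * KCeps n := by linarith

/-- dyadic projection -/
noncomputable def KCproj (n : ℕ) (p : ℝ × ℝ) : ℝ × ℝ := KCgp n (KCnx n p.1) (KCnx n p.2)

lemma KCproj_step (hg : KCGood Z (n+1) ω) {p : ℝ × ℝ} (hp : p ∈ KCS) :
    |Z (KCproj (n+1) p) ω - Z (KCproj n p) ω| ≤ 2 * KCeps (n+1) := by
  rw [KCS_mem] at hp
  obtain ⟨⟨h10, h11⟩, ⟨h20, h21⟩⟩ := hp
  have e : KCproj n p = KCgp (n+1) (2 * KCnx n p.1) (2 * KCnx n p.2) := by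
    rw [KCproj, KCgp_double]
  rw [e, KCproj]
  apply KCstep2 hg
  · calc 2 * KCnx n p.1 ≤ 2 * 2^n := by have := KCnx_le (n := n) h11; omega
      _ = 2^(n+1) := by ring
  · exact KCnx_le h11
  · calc 2 * KCnx n p.2 ≤ 2 * 2^n := by have := KCnx_le (n := n) h21; omega
      _ = 2^(n+1) := by ring
  · exact KCnx_le h21
  · have := KCnx_refine_le (n := n) h10; omega
  · have := KCnx_refine_ge (n := n) h10; omega
  · have := KCnx_refine_le (n := n) h20; omega
  · have := KCnx_refine_ge (n := n) h20; omega

/-- telescoping estimate -/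
lemma KCchain {N : ℕ} (hg : ∀ k, N ≤ k → KCGood Z k ω) {p : ℝ × ℝ} (hp : p ∈ KCS)
    {m : ℕ} (hm : N ≤ m) : ∀ n, m ≤ n →
    |Z (KCproj n p) ω - Z (KCproj m p) ω| ≤ 18 * (KCeps m - KCeps n) := by
  intro n hn
  induction n, hn using Nat.le_induction with
  | base => simp
  | succ n hmn ih =>
    have h1 : |Z (KCproj (n+1) p) ω - Z (KCproj n p) ω| ≤ 2 * KCeps (n+1) :=
      KCproj_step (hg _ (by omega)) hp
    have h2 : KCeps (n+1) = (9/10) * KCeps n := KCeps_succ n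
    calc |Z (KCproj (n+1) p) ω - Z (KCproj m p) ω|
        ≤ |Z (KCproj (n+1) p) ω - Z (KCproj n p) ω| + |Z (KCproj n p) ω - Z (KCproj m p) ω| :=
          abs_sub_le _ _ _
      _ ≤ 2 * KCeps (n+1) + 18 * (KCeps m - KCeps n) := by linarith
      _ ≤ 18 * (KCeps m - KCeps (n+1)) := by rw [h2]; linarith

lemma KCchain' {N : ℕ} (hg : ∀ k, N ≤ k → KCGood Z k ω) {p : ℝ × ℝ} (hp : p ∈ KCS)
    {m n : ℕ} (hm : N ≤ m) (hn : m ≤ n) :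
    |Z (KCproj n p) ω - Z (KCproj m p) ω| ≤ 18 * KCeps m := by
  have := KCchain hg hp hm n hn
  have := KCeps_pos n
  linarith

/-- spatial estimate -/
lemma KCspatial (hg : KCGood Z m ω) {p q : ℝ × ℝ} (hp : p ∈ KCS) (hq : q ∈ KCS)
    (h1 : |p.1 - q.1| ≤ (1/2)^m) (h2 : |p.2 - q.2| ≤ (1/2)^m) :
    |Z (KCproj m q) ω - Z (KCproj m p) ω| ≤ 2 * KCeps m := by
  rw [KCS_mem] at hp hq
  rw [abs_le] at h1 h2
  apply KCstep2 hg (KCnx_le hp.1.2) (KCnx_le hq.1.2) (KCnx_le hp.2.2) (KCnx_le hq.2.2)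
  · exact KCnx_close hp.1.1 hq.1.1 (by linarith [h1.2])
  · exact KCnx_close hq.1.1 hp.1.1 (by linarith [h1.1])
  · exact KCnx_close hp.2.1 hq.2.1 (by linarith [h2.2])
  · exact KCnx_close hq.2.1 hp.2.1 (by linarith [h2.1])

/-- convergence of the projected values -/
lemma KCconv {N : ℕ} (hg : ∀ k, N ≤ k → KCGood Z k ω) {p : ℝ × ℝ} (hp : p ∈ KCS) :
    ∃ l, Filter.Tendsto (fun n => Z (KCproj n p) ω) Filter.atTop (nhds l) := by
  apply cauchySeq_tendsto_of_complete
  rw [Metric.cauchySeq_iff']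
  intro ε hε
  obtain ⟨m, hm1, hm2⟩ := ((KCeps_tendsto.eventually_lt_const
    (show (0:ℝ) < ε/18 by positivity)).and (eventually_ge_atTop N)).exists
  refine ⟨m, fun n hn => ?_⟩
  rw [Real.dist_eq]
  calc |Z (KCproj n p) ω - Z (KCproj m p) ω| ≤ 18 * KCeps m := KCchain' hg hp hm2 hn
    _ < ε := by linarith

end KCchain

section KCprob

variable {Ω : Type*} [MeasureSpace Ω] [IsProbabilityMeasure (ℙ : Measure Ω)]
  {Z : ℝ × ℝ → Ω → ℝ}

/-- tail bound for increments -/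
lemma KCtail (hmeas : ∀ p, Measurable (Z p)) {K : ℝ} (hK : 0 ≤ K)
    (hgauss : ∀ p ∈ KCS, ∀ q ∈ KCS, ∃ var : ℝ≥0,
      (var : ℝ) ≤ K * Real.sqrt ((p.1 - q.1)^2 + (p.2 - q.2)^2) ∧
      Measure.map (fun ω => Z p ω - Z q ω) ℙ = gaussianReal 0 var)
    {p q : ℝ × ℝ} (hp : p ∈ KCS) (hq : q ∈ KCS) {d ε : ℝ}
    (hd : Real.sqrt ((p.1 - q.1)^2 + (p.2 - q.2)^2) ≤ d) (hε : 0 < ε) :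
    ℙ {ω | ε ≤ |Z p ω - Z q ω|} ≤ ENNReal.ofReal (3000 * (K * d)^3 / ε^6) := by
  obtain ⟨var, hvar, hmap⟩ := hgauss p hp q hq
  have hXm : Measurable (fun ω => Z p ω - Z q ω) := (hmeas p).sub (hmeas q)
  have hsetm : MeasurableSet {x : ℝ | ε ≤ |x|} :=
    measurableSet_le measurable_const _root_.measurable_abs
  have hrw : {ω | ε ≤ |Z p ω - Z q ω|} = (fun ω => Z p ω - Z q ω) ⁻¹' {x | ε ≤ |x|} := rfl
  rw [hrw, ← Measure.map_apply hXm hsetm, hmap]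
  refine (KCaux_gauss_tail var hε).trans ?_
  apply ENNReal.ofReal_le_ofReal
  have h1 : (var : ℝ) ≤ K * d := hvar.trans (mul_le_mul_of_nonneg_left hd hK)
  have h0 : (0:ℝ) ≤ (var : ℝ) := var.2
  have h3 : (var : ℝ)^3 ≤ (K*d)^3 := pow_le_pow_left₀ h0 h1 3
  gcongr 3000 * ?_ / ε^6


/-- bad events -/
def KCBad (Z : ℝ × ℝ → Ω → ℝ) (n : ℕ) : Set Ω :=
  (⋃ i ∈ Finset.range (2^n), ⋃ j ∈ Finset.range (2^n + 1),
    {ω | KCeps n ≤ |Z (KCgp n (i+1) j) ω - Z (KCgp n i j) ω|}) ∪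
  (⋃ i ∈ Finset.range (2^n + 1), ⋃ j ∈ Finset.range (2^n),
    {ω | KCeps n ≤ |Z (KCgp n i (j+1)) ω - Z (KCgp n i j) ω|})

lemma KCGood_of_notBad {n : ℕ} {ω : Ω} (h : ω ∉ KCBad Z n) : KCGood Z n ω := by
  simp only [KCBad, Set.mem_union, not_or, Set.mem_iUnion, not_exists, Set.mem_setOf_eq] at h
  constructor
  · intro i hi j hj
    have := h.1 i (Finset.mem_range.mpr hi) j (Finset.mem_range.mpr (by omega))
    linarith [not_le.mp this]
  · intro i hi j hj
    have := h.2 i (Finset.mem_range.mpr (by omega)) j (Finset.mem_range.mpr hj)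
    linarith [not_le.mp this]

lemma KCdist_H (n i j : ℕ) :
    Real.sqrt (((KCgp n (i+1) j).1 - (KCgp n i j).1)^2 + ((KCgp n (i+1) j).2 - (KCgp n i j).2)^2)
      ≤ (1/2)^n := by
  have h : ((KCgp n (i+1) j).1 - (KCgp n i j).1)^2 + ((KCgp n (i+1) j).2 - (KCgp n i j).2)^2
      = (((1:ℝ)/2)^n)^2 := by
    rw [KCgp, KCgp]
    push_cast
    rw [div_pow, one_pow]
    field_simp
    ring
  rw [h, Real.sqrt_sq (by positivity)]

lemma KCdist_V (n i j : ℕ) :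
    Real.sqrt (((KCgp n i (j+1)).1 - (KCgp n i j).1)^2 + ((KCgp n i (j+1)).2 - (KCgp n i j).2)^2)
      ≤ (1/2)^n := by
  have h : ((KCgp n i (j+1)).1 - (KCgp n i j).1)^2 + ((KCgp n i (j+1)).2 - (KCgp n i j).2)^2
      = (((1:ℝ)/2)^n)^2 := by
    rw [KCgp, KCgp]
    push_cast
    rw [div_pow, one_pow]
    field_simp
    ring
  rw [h, Real.sqrt_sq (by positivity)]

/-- the common ratio -/
noncomputable def KCq : ℝ := 500000 / 531441

lemma KCterm_eq (K : ℝ) (n : ℕ) :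
    3000 * (K * (1/2)^n)^3 / (KCeps n)^6 = 3000 * K^3 * ((1/2)^3 * (10/9)^6)^n := by
  have h109 : (10/9:ℝ) = (9/10:ℝ)⁻¹ := by norm_num
  rw [KCeps, h109, div_eq_iff (by positivity)]
  field_simp
  ring_nf
  rw [pow_mul', pow_mul', mul_assoc, ← mul_pow]
  norm_num

lemma KCBad_measure (hmeas : ∀ p, Measurable (Z p)) {K : ℝ} (hK : 0 ≤ K)
    (hgauss : ∀ p ∈ KCS, ∀ q ∈ KCS, ∃ var : ℝ≥0,
      (var : ℝ) ≤ K * Real.sqrt ((p.1 - q.1)^2 + (p.2 - q.2)^2) ∧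
      Measure.map (fun ω => Z p ω - Z q ω) ℙ = gaussianReal 0 var) (n : ℕ) :
    ℙ (KCBad Z n) ≤ ENNReal.ofReal (12000 * K^3) * ENNReal.ofReal KCq ^ n := by
  set c : ℝ := 3000 * (K * (1/2)^n)^3 / (KCeps n)^6 with hc
  have hc0 : 0 ≤ c := by rw [hc]; positivity
  have hterm : ∀ i j : ℕ, i + 1 ≤ 2^n → j ≤ 2^n →
      ℙ {ω | KCeps n ≤ |Z (KCgp n (i+1) j) ω - Z (KCgp n i j) ω|} ≤ ENNReal.ofReal c := by
    intro i j hi hj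
    exact KCtail hmeas hK hgauss (KCgp_mem hi hj) (KCgp_mem (by omega) hj)
      (KCdist_H n i j) (KCeps_pos n)
  have htermV : ∀ i j : ℕ, i ≤ 2^n → j + 1 ≤ 2^n →
      ℙ {ω | KCeps n ≤ |Z (KCgp n i (j+1)) ω - Z (KCgp n i j) ω|} ≤ ENNReal.ofReal c := by
    intro i j hi hj
    exact KCtail hmeas hK hgauss (KCgp_mem hi hj) (KCgp_mem hi (by omega))
      (KCdist_V n i j) (KCeps_pos n)
  have hcount : ℙ (KCBad Z n) ≤ (2 * (2^n * (2^n + 1)) : ℕ) * ENNReal.ofReal c := by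
    rw [KCBad]
    refine (measure_union_le _ _).trans ?_
    have hA : ℙ (⋃ i ∈ Finset.range (2^n), ⋃ j ∈ Finset.range (2^n + 1),
        {ω | KCeps n ≤ |Z (KCgp n (i+1) j) ω - Z (KCgp n i j) ω|})
        ≤ (2^n * (2^n + 1) : ℕ) * ENNReal.ofReal c := by
      refine (measure_biUnion_finset_le _ _).trans ?_
      calc ∑ i ∈ Finset.range (2^n), ℙ (⋃ j ∈ Finset.range (2^n + 1),
            {ω | KCeps n ≤ |Z (KCgp n (i+1) j) ω - Z (KCgp n i j) ω|})
          ≤ ∑ i ∈ Finset.range (2^n), ∑ j ∈ Finset.range (2^n + 1), ℙ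
            {ω | KCeps n ≤ |Z (KCgp n (i+1) j) ω - Z (KCgp n i j) ω|} := by
            exact Finset.sum_le_sum fun i _ => measure_biUnion_finset_le _ _
        _ ≤ ∑ i ∈ Finset.range (2^n), ∑ j ∈ Finset.range (2^n + 1), ENNReal.ofReal c := by
            refine Finset.sum_le_sum fun i hi => Finset.sum_le_sum fun j hj => ?_
            exact hterm i j (by have := Finset.mem_range.mp hi; omega)
              (by have := Finset.mem_range.mp hj; omega)
        _ = (2^n * (2^n + 1) : ℕ) * ENNReal.ofReal c := by
            rw [Finset.sum_const, Finset.sum_const, Finset.card_range, Finset.card_range,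
              smul_smul, nsmul_eq_mul]
            try push_cast
            try ring
    have hB : ℙ (⋃ i ∈ Finset.range (2^n + 1), ⋃ j ∈ Finset.range (2^n),
        {ω | KCeps n ≤ |Z (KCgp n i (j+1)) ω - Z (KCgp n i j) ω|})
        ≤ (2^n * (2^n + 1) : ℕ) * ENNReal.ofReal c := by
      refine (measure_biUnion_finset_le _ _).trans ?_
      calc ∑ i ∈ Finset.range (2^n + 1), ℙ (⋃ j ∈ Finset.range (2^n),
            {ω | KCeps n ≤ |Z (KCgp n i (j+1)) ω - Z (KCgp n i j) ω|})
          ≤ ∑ i ∈ Finset.range (2^n + 1), ∑ j ∈ Finset.range (2^n), ℙ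
            {ω | KCeps n ≤ |Z (KCgp n i (j+1)) ω - Z (KCgp n i j) ω|} := by
            exact Finset.sum_le_sum fun i _ => measure_biUnion_finset_le _ _
        _ ≤ ∑ i ∈ Finset.range (2^n + 1), ∑ j ∈ Finset.range (2^n), ENNReal.ofReal c := by
            refine Finset.sum_le_sum fun i hi => Finset.sum_le_sum fun j hj => ?_
            exact htermV i j (by have := Finset.mem_range.mp hi; omega)
              (by have := Finset.mem_range.mp hj; omega)
        _ = (2^n * (2^n + 1) : ℕ) * ENNReal.ofReal c := by
            rw [Finset.sum_const, Finset.sum_const, Finset.card_range, Finset.card_range,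
              smul_smul, nsmul_eq_mul]
            try push_cast
            try ring
    calc ℙ _ + ℙ _ ≤ (2^n * (2^n + 1) : ℕ) * ENNReal.ofReal c
          + (2^n * (2^n + 1) : ℕ) * ENNReal.ofReal c := add_le_add hA hB
      _ = (2 * (2^n * (2^n + 1)) : ℕ) * ENNReal.ofReal c := by push_cast; ring
  refine hcount.trans ?_
  rw [show ((2 * (2^n * (2^n + 1)) : ℕ) : ℝ≥0∞) = ENNReal.ofReal ((2 * (2^n * (2^n+1)) : ℕ) : ℝ) by
    rw [ENNReal.ofReal_natCast]]
  rw [← ENNReal.ofReal_mul (by positivity), ← ENNReal.ofReal_pow (by rw [KCq]; norm_num),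
    ← ENNReal.ofReal_mul (by positivity)]
  apply ENNReal.ofReal_le_ofReal
  have hKe := KCterm_eq K n
  rw [← hc] at hKe
  rw [hKe]
  have hcnt : ((2 * (2^n * (2^n+1)) : ℕ) : ℝ) ≤ 4 * 4^n := by
    push_cast
    have h1 : (2:ℝ)^n ≤ 4^n := pow_le_pow_left₀ (by norm_num) (by norm_num) n
    have h2 : (2:ℝ)^n * (2:ℝ)^n = 4^n := by rw [← mul_pow]; norm_num
    nlinarith [pow_pos (show (0:ℝ) < 2 by norm_num) n]
  have hq : ∀ m : ℕ, (4:ℝ)^m * ((1/2)^3 * (10/9)^6)^m = KCq ^ m := by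
    intro m
    rw [← mul_pow]
    congr 1
    rw [KCq]
    norm_num
  calc ((2 * (2^n * (2^n+1)) : ℕ) : ℝ) * (3000 * K^3 * ((1/2)^3 * (10/9)^6)^n)
      ≤ (4 * 4^n) * (3000 * K^3 * ((1/2)^3 * (10/9)^6)^n) := by
        apply mul_le_mul_of_nonneg_right hcnt (by positivity)
    _ = 12000 * K^3 * (4^n * ((1/2)^3 * (10/9)^6)^n) := by ring
    _ = 12000 * K^3 * KCq ^ n := by rw [hq n]

lemma KCBad_ae (hmeas : ∀ p, Measurable (Z p)) {K : ℝ} (hK : 0 ≤ K)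
    (hgauss : ∀ p ∈ KCS, ∀ q ∈ KCS, ∃ var : ℝ≥0,
      (var : ℝ) ≤ K * Real.sqrt ((p.1 - q.1)^2 + (p.2 - q.2)^2) ∧
      Measure.map (fun ω => Z p ω - Z q ω) ℙ = gaussianReal 0 var) :
    ∀ᵐ ω : Ω, ∃ N, ∀ n, N ≤ n → KCGood Z n ω := by
  have hsum : ∑' n, ℙ (KCBad Z n) ≠ ⊤ := by
    apply ne_top_of_le_ne_top (b := ENNReal.ofReal (12000 * K^3) * (1 - ENNReal.ofReal KCq)⁻¹)
    · apply ENNReal.mul_ne_top ENNReal.ofReal_ne_top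
      rw [ENNReal.inv_ne_top]
      intro h0
      rw [tsub_eq_zero_iff_le] at h0
      have : ENNReal.ofReal KCq < 1 := ENNReal.ofReal_lt_one.mpr (by rw [KCq]; norm_num)
      exact absurd h0 (not_le.mpr this)
    · calc ∑' n, ℙ (KCBad Z n)
          ≤ ∑' n, ENNReal.ofReal (12000 * K^3) * ENNReal.ofReal KCq ^ n :=
            ENNReal.tsum_le_tsum (KCBad_measure hmeas hK hgauss)
        _ = ENNReal.ofReal (12000 * K^3) * ∑' n, ENNReal.ofReal KCq ^ n := by
            rw [ENNReal.tsum_mul_left]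
        _ = ENNReal.ofReal (12000 * K^3) * (1 - ENNReal.ofReal KCq)⁻¹ := by
            rw [ENNReal.tsum_geometric]
  filter_upwards [MeasureTheory.ae_eventually_notMem hsum] with ω hω
  obtain ⟨N, hN⟩ := eventually_atTop.mp hω
  exact ⟨N, fun n hn => KCGood_of_notBad (hN n hn)⟩

end KCprob

section KCsquare

variable {Ω : Type*} [MeasureSpace Ω] [IsProbabilityMeasure (ℙ : Measure Ω)]

theorem KCsquare (Z : ℝ × ℝ → Ω → ℝ) (hmeas : ∀ p, Measurable (Z p)) {K : ℝ} (hK : 0 ≤ K)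
    (hgauss : ∀ p ∈ KCS, ∀ q ∈ KCS, ∃ var : ℝ≥0,
      (var : ℝ) ≤ K * Real.sqrt ((p.1 - q.1)^2 + (p.2 - q.2)^2) ∧
      Measure.map (fun ω => Z p ω - Z q ω) ℙ = gaussianReal 0 var) :
    ∃ F : ℝ × ℝ → Ω → ℝ,
      (∀ p ∈ KCS, ∀ᵐ ω, F p ω = Z p ω) ∧
      (∀ ω, ContinuousOn (fun p => F p ω) KCS) := by
  classical
  set G : Set Ω := {ω | ∃ N, ∀ n, N ≤ n → KCGood Z n ω} with hG
  refine ⟨fun p ω => if ω ∈ G then limUnder atTop (fun n => Z (KCproj n p) ω) else 0, ?_, ?_⟩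
  · -- a.e. equality
    intro p hp
    have hpS := hp
    rw [KCS_mem] at hpS
    -- Borel–Cantelli at the point p
    have hprojS : ∀ n, KCproj n p ∈ KCS := fun n =>
      KCgp_mem (KCnx_le hpS.1.2) (KCnx_le hpS.2.2)
    have hdistp : ∀ n : ℕ, Real.sqrt (((KCproj n p).1 - p.1)^2 + ((KCproj n p).2 - p.2)^2)
        ≤ 2 * (1/2)^n := by
      intro n
      have h1 : |(KCproj n p).1 - p.1| ≤ (1/2)^n := by
        rw [KCproj, KCgp]
        rw [abs_sub_comm]
        exact KCnx_dist hpS.1.1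
      have h2 : |(KCproj n p).2 - p.2| ≤ (1/2)^n := by
        rw [KCproj, KCgp]
        rw [abs_sub_comm]
        exact KCnx_dist hpS.2.1
      have key : ((KCproj n p).1 - p.1)^2 + ((KCproj n p).2 - p.2)^2 ≤ (2 * (1/2)^n)^2 := by
        have a1 := abs_nonneg ((KCproj n p).1 - p.1)
        have a2 := abs_nonneg ((KCproj n p).2 - p.2)
        have b1 : ((KCproj n p).1 - p.1)^2 = |(KCproj n p).1 - p.1|^2 := (sq_abs _).symm
        have b2 : ((KCproj n p).2 - p.2)^2 = |(KCproj n p).2 - p.2|^2 := (sq_abs _).symm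
        rw [b1, b2]
        nlinarith
      calc Real.sqrt (((KCproj n p).1 - p.1)^2 + ((KCproj n p).2 - p.2)^2)
          ≤ Real.sqrt ((2 * (1/2)^n)^2) := Real.sqrt_le_sqrt key
        _ = 2 * (1/2)^n := Real.sqrt_sq (by positivity)
    set E : ℕ → Set Ω := fun n => {ω | KCeps n ≤ |Z (KCproj n p) ω - Z p ω|} with hE
    have hEsum : ∑' n, ℙ (E n) ≠ ⊤ := by
      have hEb : ∀ n, ℙ (E n) ≤ ENNReal.ofReal (8 * (3000 * (K * (1/2)^n)^3 / (KCeps n)^6)) := by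
        intro n
        have := KCtail (Z := Z) hmeas hK hgauss (hprojS n) hp (hdistp n) (KCeps_pos n)
        refine this.trans (ENNReal.ofReal_le_ofReal ?_)
        have he : 3000 * (K * (2 * (1/2)^n))^3 / (KCeps n)^6
            = 8 * (3000 * (K * (1/2)^n)^3 / (KCeps n)^6) := by
          field_simp
          ring
        rw [he]
      have hterm : ∀ n, ℙ (E n) ≤ ENNReal.ofReal (8 * (3000 * K^3)) * ENNReal.ofReal KCq ^ n := by
        intro n
        refine (hEb n).trans ?_
        rw [← ENNReal.ofReal_pow (by rw [KCq]; norm_num), ← ENNReal.ofReal_mul (by positivity)]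
        apply ENNReal.ofReal_le_ofReal
        rw [KCterm_eq K n]
        have hq : (4:ℝ)^n * ((1/2)^3 * (10/9)^6)^n = KCq ^ n := by
          rw [← mul_pow]
          congr 1
          rw [KCq]
          norm_num
        have h4 : (1:ℝ) ≤ 4^n := one_le_pow₀ (by norm_num)
        have hP : (0:ℝ) ≤ ((1/2:ℝ)^3 * (10/9)^6)^n := by positivity
        calc 8 * (3000 * K^3 * ((1/2)^3 * (10/9)^6)^n)
            = 8 * (3000 * K^3) * (1 * ((1/2)^3 * (10/9)^6)^n) := by ring
          _ ≤ 8 * (3000 * K^3) * (4^n * ((1/2)^3 * (10/9)^6)^n) := by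
              have hnn : (0:ℝ) ≤ 8 * (3000 * K^3) := by positivity
              exact mul_le_mul_of_nonneg_left
                (mul_le_mul_of_nonneg_right h4 hP) hnn
          _ = 8 * (3000 * K^3) * KCq ^ n := by rw [hq]
      apply ne_top_of_le_ne_top
        (b := ENNReal.ofReal (8 * (3000 * K^3)) * (1 - ENNReal.ofReal KCq)⁻¹)
      · apply ENNReal.mul_ne_top ENNReal.ofReal_ne_top
        rw [ENNReal.inv_ne_top]
        intro h0
        rw [tsub_eq_zero_iff_le] at h0
        have : ENNReal.ofReal KCq < 1 := ENNReal.ofReal_lt_one.mpr (by rw [KCq]; norm_num)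
        exact absurd h0 (not_le.mpr this)
      · calc ∑' n, ℙ (E n)
            ≤ ∑' n, ENNReal.ofReal (8 * (3000 * K^3)) * ENNReal.ofReal KCq ^ n :=
              ENNReal.tsum_le_tsum hterm
          _ = ENNReal.ofReal (8 * (3000 * K^3)) * (1 - ENNReal.ofReal KCq)⁻¹ := by
              rw [ENNReal.tsum_mul_left, ENNReal.tsum_geometric]
    filter_upwards [KCBad_ae hmeas hK hgauss, MeasureTheory.ae_eventually_notMem hEsum]
      with ω hGω hEω
    have hωG : ω ∈ G := hGω
    rw [if_pos hωG]
    -- the projected values tend to Z p ω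
    have htend : Filter.Tendsto (fun n => Z (KCproj n p) ω) atTop (nhds (Z p ω)) := by
      rw [Metric.tendsto_atTop]
      intro ε hε
      obtain ⟨N1, hN1⟩ := eventually_atTop.mp hEω
      obtain ⟨N2, hN2⟩ := eventually_atTop.mp
        ((KCeps_tendsto.eventually_lt_const hε).and (eventually_ge_atTop 0))
      refine ⟨max N1 N2, fun n hn => ?_⟩
      rw [Real.dist_eq]
      have h1 : ω ∉ E n := hN1 n (le_trans (le_max_left _ _) hn)
      have h2 : KCeps n < ε := (hN2 n (le_trans (le_max_right _ _) hn)).1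
      rw [hE] at h1
      simp only [Set.mem_setOf_eq, not_le] at h1
      linarith
    exact htend.limUnder_eq
  · -- continuity
    intro ω
    by_cases hω : ω ∈ G
    · have hωG : ω ∈ G := hω
      obtain ⟨N, hN⟩ := hω
      rw [Metric.continuousOn_iff]
      intro p hp ε hε
      obtain ⟨m, hm⟩ := eventually_atTop.mp
        ((KCeps_tendsto.eventually_lt_const (show (0:ℝ) < ε/38 by positivity)).and
          (eventually_ge_atTop N))
      have hm1 : KCeps m < ε / 38 := (hm m le_rfl).1
      have hmN : N ≤ m := (hm m le_rfl).2
      refine ⟨(1/2)^m, by positivity, fun q hq hdist => ?_⟩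
      simp only [if_pos hωG]
      rw [Prod.dist_eq] at hdist
      have hd1 : |q.1 - p.1| ≤ (1/2)^m := by
        have h := (le_max_left (dist q.1 p.1) (dist q.2 p.2)).trans_lt hdist
        rw [Real.dist_eq] at h
        exact h.le
      have hd2 : |q.2 - p.2| ≤ (1/2)^m := by
        have h := (le_max_right (dist q.1 p.1) (dist q.2 p.2)).trans_lt hdist
        rw [Real.dist_eq] at h
        exact h.le
      set u : ℕ → ℝ := fun n => Z (KCproj n p) ω with hu
      set w : ℕ → ℝ := fun n => Z (KCproj n q) ω with hw
      have hcu : Filter.Tendsto u atTop (nhds (limUnder atTop u)) :=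
        tendsto_nhds_limUnder (KCconv hN hp)
      have hcw : Filter.Tendsto w atTop (nhds (limUnder atTop w)) :=
        tendsto_nhds_limUnder (KCconv hN hq)
      have hbu : |limUnder atTop u - u m| ≤ 18 * KCeps m := by
        apply le_of_tendsto ((hcu.sub_const (u m)).abs)
        filter_upwards [eventually_ge_atTop m] with n hn
        exact KCchain' hN hp hmN hn
      have hbw : |limUnder atTop w - w m| ≤ 18 * KCeps m := by
        apply le_of_tendsto ((hcw.sub_const (w m)).abs)
        filter_upwards [eventually_ge_atTop m] with n hn
        exact KCchain' hN hq hmN hn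
      have hmid : |w m - u m| ≤ 2 * KCeps m := by
        apply KCspatial (hN m hmN) hp hq
        · rw [abs_sub_comm]; exact hd1
        · rw [abs_sub_comm]; exact hd2
      rw [Real.dist_eq]
      have tri : |limUnder atTop w - limUnder atTop u|
          ≤ |limUnder atTop w - w m| + |w m - u m| + |u m - limUnder atTop u| := by
        have t1 := abs_sub_le (limUnder atTop w) (w m) (limUnder atTop u)
        have t2 := abs_sub_le (w m) (u m) (limUnder atTop u)
        linarith
      have habs : |u m - limUnder atTop u| = |limUnder atTop u - u m| := abs_sub_comm _ _
      linarith
    · simp only [if_neg hω]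
      exact continuousOn_const

end KCsquare


/-- a Kolmogorov–Čentsov-type criterion: a process on a compact rectangle
`T ⊆ ℝ²` whose increments are centered Gaussian with variance bounded by `C·‖p - q‖`
admits a modification with continuous sample paths. -/
theorem stmt_10
    {Ω : Type*} [MeasureSpace Ω] [IsProbabilityMeasure (ℙ : Measure Ω)]
    (a₁ b₁ a₂ b₂ : ℝ)
    (Y : ℝ × ℝ → Ω → ℝ)
    (hmeas : ∀ p, Measurable (Y p))
    (C : ℝ) (hC : 0 ≤ C)
    (hgauss : ∀ p ∈ Set.Icc a₁ b₁ ×ˢ Set.Icc a₂ b₂,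
      ∀ q ∈ Set.Icc a₁ b₁ ×ˢ Set.Icc a₂ b₂,
        ∃ var : NNReal,
          (var : ℝ) ≤ C * Real.sqrt ((p.1 - q.1) ^ 2 + (p.2 - q.2) ^ 2) ∧
          Measure.map (fun ω => Y p ω - Y q ω) ℙ = gaussianReal 0 var) :
    ∃ Yt : ℝ × ℝ → Ω → ℝ,
      (∀ p ∈ Set.Icc a₁ b₁ ×ˢ Set.Icc a₂ b₂, ∀ᵐ ω, Yt p ω = Y p ω) ∧
      (∀ ω, ContinuousOn (fun p => Yt p ω) (Set.Icc a₁ b₁ ×ˢ Set.Icc a₂ b₂)) := by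
  by_cases hne : a₁ ≤ b₁ ∧ a₂ ≤ b₂
  · obtain ⟨hab1, hab2⟩ := hne
    set w₁ : ℝ := b₁ - a₁ with hw₁
    set w₂ : ℝ := b₂ - a₂ with hw₂
    have hw1 : 0 ≤ w₁ := by rw [hw₁]; linarith
    have hw2 : 0 ≤ w₂ := by rw [hw₂]; linarith
    set φ : ℝ × ℝ → ℝ × ℝ := fun p => (a₁ + p.1 * w₁, a₂ + p.2 * w₂) with hφdef
    set ψ : ℝ × ℝ → ℝ × ℝ := fun p => ((p.1 - a₁) / w₁, (p.2 - a₂) / w₂) with hψdef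
    set T : Set (ℝ × ℝ) := Set.Icc a₁ b₁ ×ˢ Set.Icc a₂ b₂ with hT
    have hφT : ∀ p ∈ KCS, φ p ∈ T := by
      intro p hp
      rw [KCS_mem] at hp
      rw [hT]
      constructor
      · constructor
        · simp only [hφdef]; nlinarith [hp.1.1, hp.1.2]
        · simp only [hφdef]; rw [hw₁] at *; nlinarith [hp.1.1, hp.1.2]
      · constructor
        · simp only [hφdef]; nlinarith [hp.2.1, hp.2.2]
        · simp only [hφdef]; rw [hw₂] at *; nlinarith [hp.2.1, hp.2.2]
    set Z : ℝ × ℝ → Ω → ℝ := fun p => Y (φ p) with hZdef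
    have hZmeas : ∀ p, Measurable (Z p) := fun p => hmeas _
    set K : ℝ := C * (w₁ + w₂ + 1) with hKdef
    have hK : 0 ≤ K := by rw [hKdef]; positivity
    have hgauss' : ∀ p ∈ KCS, ∀ q ∈ KCS, ∃ var : ℝ≥0,
        (var : ℝ) ≤ K * Real.sqrt ((p.1 - q.1)^2 + (p.2 - q.2)^2) ∧
        Measure.map (fun ω => Z p ω - Z q ω) ℙ = gaussianReal 0 var := by
      intro p hp q hq
      obtain ⟨var, hvar, hmap⟩ := hgauss (φ p) (hφT p hp) (φ q) (hφT q hq)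
      refine ⟨var, ?_, hmap⟩
      have e1 : (φ p).1 - (φ q).1 = w₁ * (p.1 - q.1) := by simp only [hφdef]; ring
      have e2 : (φ p).2 - (φ q).2 = w₂ * (p.2 - q.2) := by simp only [hφdef]; ring
      rw [e1, e2] at hvar
      refine hvar.trans ?_
      rw [hKdef, mul_assoc]
      apply mul_le_mul_of_nonneg_left _ hC
      have hsq : (w₁ * (p.1 - q.1))^2 + (w₂ * (p.2 - q.2))^2
          ≤ (w₁ + w₂ + 1)^2 * ((p.1 - q.1)^2 + (p.2 - q.2)^2) := by
        nlinarith [sq_nonneg (p.1 - q.1), sq_nonneg (p.2 - q.2), sq_nonneg (w₁ + w₂),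
          mul_nonneg hw1 hw2, sq_nonneg w₁, sq_nonneg w₂,
          mul_nonneg (mul_nonneg hw1 hw2) (sq_nonneg (p.1 - q.1)),
          mul_nonneg (mul_nonneg hw1 hw2) (sq_nonneg (p.2 - q.2)),
          mul_nonneg hw1 (sq_nonneg (p.1 - q.1)), mul_nonneg hw2 (sq_nonneg (p.1 - q.1)),
          mul_nonneg hw1 (sq_nonneg (p.2 - q.2)), mul_nonneg hw2 (sq_nonneg (p.2 - q.2))]
      calc Real.sqrt ((w₁ * (p.1 - q.1))^2 + (w₂ * (p.2 - q.2))^2)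
          ≤ Real.sqrt ((w₁ + w₂ + 1)^2 * ((p.1 - q.1)^2 + (p.2 - q.2)^2)) :=
            Real.sqrt_le_sqrt hsq
        _ = (w₁ + w₂ + 1) * Real.sqrt ((p.1 - q.1)^2 + (p.2 - q.2)^2) := by
            rw [Real.sqrt_mul (sq_nonneg _), Real.sqrt_sq (by positivity)]
    obtain ⟨F, hF1, hF2⟩ := KCsquare Z hZmeas hK hgauss'
    have hcoord : ∀ (a b x w : ℝ), w = b - a → a ≤ x → x ≤ b →
        0 ≤ (x - a)/w ∧ (x - a)/w ≤ 1 := by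
      intro a b x w hw hax hxb
      rcases eq_or_lt_of_le (show 0 ≤ w by rw [hw]; linarith) with h0 | h0
      · rw [← h0, div_zero]; norm_num
      · refine ⟨div_nonneg (by linarith) h0.le, ?_⟩
        rw [div_le_one h0, hw]; linarith
    have hψT : ∀ p ∈ T, ψ p ∈ KCS := by
      intro p hp
      rw [hT] at hp
      obtain ⟨⟨ha1, hb1⟩, ⟨ha2, hb2⟩⟩ := hp
      rw [KCS_mem]
      exact ⟨hcoord a₁ b₁ p.1 w₁ hw₁ ha1 hb1, hcoord a₂ b₂ p.2 w₂ hw₂ ha2 hb2⟩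
    have hcoord2 : ∀ (a b x w : ℝ), w = b - a → a ≤ x → x ≤ b → a + (x - a)/w * w = x := by
      intro a b x w hw hax hxb
      rcases eq_or_ne w 0 with h0 | h0
      · have hx : x = a := by rw [h0] at hw; linarith
        rw [h0, hx]; norm_num
      · rw [div_mul_cancel₀ _ h0]; ring
    have hφψ : ∀ p ∈ T, φ (ψ p) = p := by
      intro p hp
      rw [hT] at hp
      obtain ⟨⟨ha1, hb1⟩, ⟨ha2, hb2⟩⟩ := hp
      simp only [hφdef, hψdef]
      rw [Prod.ext_iff]
      exact ⟨hcoord2 a₁ b₁ p.1 w₁ hw₁ ha1 hb1, hcoord2 a₂ b₂ p.2 w₂ hw₂ ha2 hb2⟩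
    refine ⟨fun p ω => F (ψ p) ω, ?_, ?_⟩
    · intro p hp
      filter_upwards [hF1 (ψ p) (hψT p hp)] with ω heq
      rw [heq]
      show Y (φ (ψ p)) ω = Y p ω
      rw [hφψ p hp]
    · intro ω
      have hψc : Continuous ψ := by
        rw [hψdef]
        exact ((continuous_fst.sub continuous_const).div_const _).prodMk
          ((continuous_snd.sub continuous_const).div_const _)
      exact (hF2 ω).comp hψc.continuousOn (fun p hp => hψT p hp)
  · refine ⟨fun _ _ => 0, ?_, fun ω => continuousOn_const⟩
    intro p hp
    obtain ⟨⟨h1, h2⟩, ⟨h3, h4⟩⟩ := hp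
    exact absurd ⟨le_trans h1 h2, le_trans h3 h4⟩ hne
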